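/- (Key descent inequality for inexact composite steps) Let f = h + g where h is μ-strongly convex with L-Lipschitz gradient (0 ≤ μ ≤ L) and g is proper closed convex. Fix λ > 0, τ ≥ 0, ε ≥ 0, x ∈ H. Let ĝ ∈ H with ‖ĝ - ∇h(x)‖ ≤ τ/λ, let S = S_{λf}(x,τ,ε) be a type-1 ε-approximation of prox_{λg}(x - λ ĝ), let G = (x - S)/λ, σ = S - prox_{λg}(x - λĝ), and e = λ(∇h(x) - ĝ). Then for all y ∈ H: ε²/(2λ) + f(y) ≥ f(S) + ⟨G, y - x⟩ + (1/λ)⟨σ + e, y - S⟩ + (μ/2)‖y - x‖² + (λ/2)(2 - λL)‖G‖². -/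

import Mathlib

open RealInnerProductSpace

section Aux
variable {H : Type*} [NormedAddCommGroup H] [InnerProductSpace ℝ H] [CompleteSpace H]

/-- Derivative of `F` along a line, from the gradient. -/
lemma hasDerivAt_line {F : H → ℝ} {x v gp : H} {t : ℝ}
    (h : HasGradientAt F gp (x + t • v)) :
    HasDerivAt (fun s : ℝ => F (x + s • v)) ⟪gp, v⟫ t := by
  have hline : HasDerivAt (fun s : ℝ => x + s • v) v t := by
    simpa using ((hasDerivAt_id t).smul_const v).const_add x
  have := (hasGradientAt_iff_hasFDerivAt.mp h).comp_hasDerivAt t hline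
  simpa [InnerProductSpace.toDual_apply_apply, Function.comp_def] using this

/-- Gradient inequality for a convex function. -/
lemma grad_ineq {F : H → ℝ} (hF : ConvexOn ℝ Set.univ F) {x gx : H}
    (hx : HasGradientAt F gx x) (y : H) :
    F x + ⟪gx, y - x⟫ ≤ F y := by
  set φ : ℝ → ℝ := fun t => F (x + t • (y - x)) with hφ
  have hx' : HasGradientAt F gx (x + (0:ℝ) • (y - x)) := by simpa using hx
  have hd : HasDerivAt φ ⟪gx, y - x⟫ 0 := hasDerivAt_line hx'
  have hslope := hasDerivAt_iff_tendsto_slope.mp hd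
  have hmem : Set.Ioc (0:ℝ) 1 ∈ nhdsWithin (0:ℝ) (Set.Ioi 0) :=
    Ioc_mem_nhdsGT_of_mem ⟨le_refl 0, zero_lt_one⟩
  have hφ0 : φ 0 = F x := by simp [hφ]
  have hbound : ∀ t ∈ Set.Ioc (0:ℝ) 1, slope φ 0 t ≤ F y - F x := by
    intro t ht
    have ht0 : (0:ℝ) < t := ht.1
    have hcomb : φ t ≤ (1 - t) * F x + t * F y := by
      have hmm : (1 - t) • x + t • y = x + t • (y - x) := by
        rw [sub_smul, one_smul, smul_sub]; abel
      have := hF.2 (Set.mem_univ x) (Set.mem_univ y)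
        (by linarith [ht.2] : (0:ℝ) ≤ 1 - t) (le_of_lt ht0) (by ring)
      simpa [hmm, hφ] using this
    rw [slope_def_field, hφ0, sub_zero, div_le_iff₀ ht0]
    nlinarith
  have hle : ⟪gx, y - x⟫ ≤ F y - F x := by
    have hmono' : nhdsWithin (0:ℝ) (Set.Ioi 0) ≤ nhdsWithin (0:ℝ) {(0:ℝ)}ᶜ :=
      nhdsWithin_mono _ (fun t ht => by simpa using ne_of_gt ht)
    refine le_of_tendsto (hslope.mono_left hmono') ?_
    filter_upwards [hmem] with t ht using hbound t ht
  linarith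

/-- A function with monotone gradient is convex. -/
lemma convexOn_of_monotone_grad {F : H → ℝ} {gF : H → H}
    (hgrad : ∀ z : H, HasGradientAt F (gF z) z)
    (hmono : ∀ a b : H, 0 ≤ ⟪gF a - gF b, a - b⟫) :
    ConvexOn ℝ Set.univ F := by
  refine ⟨convex_univ, ?_⟩
  intro x _ y _ a b ha hb hab
  set φ : ℝ → ℝ := fun t => F (x + t • (y - x)) with hφ
  have hφd : ∀ t : ℝ, HasDerivAt φ ⟪gF (x + t • (y - x)), y - x⟫ t :=
    fun t => hasDerivAt_line (hgrad _)
  have hdiff : Differentiable ℝ φ := fun t => (hφd t).differentiableAt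
  have hderiv : deriv φ = fun t => ⟪gF (x + t • (y - x)), y - x⟫ :=
    funext fun t => (hφd t).deriv
  have hmonoderiv : Monotone (deriv φ) := by
    rw [hderiv]
    intro s t hst
    rcases eq_or_lt_of_le hst with rfl | hlt
    · exact le_rfl
    · have h1 := hmono (x + t • (y - x)) (x + s • (y - x))
      have h2 : (x + t • (y - x)) - (x + s • (y - x)) = (t - s) • (y - x) := by
        rw [sub_smul]; abel
      rw [h2, real_inner_smul_right, inner_sub_left] at h1
      nlinarith [h1, sub_pos.mpr hlt]
  have hconv := hmonoderiv.convexOn_univ_of_deriv hdiff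
  have := hconv.2 (Set.mem_univ (0:ℝ)) (Set.mem_univ (1:ℝ)) ha hb hab
  have hb1 : a • (0:ℝ) + b • (1:ℝ) = b := by simp
  rw [hb1] at this
  have hφb : φ b = F (a • x + b • y) := by
    have : a • x + b • y = x + b • (y - x) := by
      have : a = 1 - b := by linarith
      rw [this, sub_smul, one_smul, smul_sub]; abel
    rw [hφ]; simp [this]
  have hφ1 : φ 1 = F y := by simp [hφ]
  have hφ0 : φ 0 = F x := by simp [hφ]
  rw [hφb, hφ0, hφ1] at this
  simpa [smul_eq_mul] using this

/-- Gradient of `c/2 * ‖·‖²`. -/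
lemma hasGradientAt_half_sq (c : ℝ) (x : H) :
    HasGradientAt (fun w : H => c / 2 * ‖w‖ ^ 2) (c • x) x := by
  rw [hasGradientAt_iff_hasFDerivAt]
  have h1 : HasFDerivAt (fun w : H => ‖w‖ ^ 2) (2 • (innerSL ℝ x)) x :=
    (hasStrictFDerivAt_norm_sq x).hasFDerivAt
  have h2 := h1.const_mul (c / 2)
  have heq : InnerProductSpace.toDual ℝ H (c • x) = (c / 2) • (2 • (innerSL ℝ x)) := by
    ext w
    simp [real_inner_smul_left]
    ring
  rw [heq]
  exact h2

lemma hasGradientAt_sub {F G : H → ℝ} {a b x : H}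
    (hf : HasGradientAt F a x) (hg : HasGradientAt G b x) :
    HasGradientAt (fun w => F w - G w) (a - b) x := by
  rw [hasGradientAt_iff_hasFDerivAt] at *
  have := hf.sub hg
  rwa [← map_sub (InnerProductSpace.toDual ℝ H)] at this

end Aux

set_option maxHeartbeats 1000000 in
/-- Key descent inequality (Lemma 4.1) for inexact composite proximal-gradient steps. -/
theorem stmt_19 {H : Type*} [NormedAddCommGroup H] [InnerProductSpace ℝ H]
    [CompleteSpace H]
    (μ L : ℝ) (hμ : 0 ≤ μ) (hμL : μ ≤ L)
    (h g : H → ℝ) (gradh : H → H)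
    (hh : StrongConvexOn Set.univ μ h)
    (hgrad : ∀ z : H, HasGradientAt h (gradh z) z)
    (hLip : ∀ a b : H, ‖gradh a - gradh b‖ ≤ L * ‖a - b‖)
    (hg : ConvexOn ℝ Set.univ g) (hglsc : LowerSemicontinuous g)
    (lam τ ε : ℝ) (hlam : 0 < lam) (hτ : 0 ≤ τ) (hε : 0 ≤ ε)
    (x ghat S P : H)
    (hghat : ‖ghat - gradh x‖ ≤ τ / lam)
    (hP : IsMinOn (fun y => g y + ‖y - (x - lam • ghat)‖ ^ 2 / (2 * lam)) Set.univ P)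
    (hS : g S + ‖S - (x - lam • ghat)‖ ^ 2 / (2 * lam)
      ≤ ε ^ 2 / (2 * lam)
        + ⨅ y : H, g y + ‖y - (x - lam • ghat)‖ ^ 2 / (2 * lam)) :
    ∀ y : H,
      ε ^ 2 / (2 * lam) + (h y + g y)
        ≥ (h S + g S) + ⟪lam⁻¹ • (x - S), y - x⟫
          + (1 / lam) * ⟪(S - P) + lam • (gradh x - ghat), y - S⟫
          + μ / 2 * ‖y - x‖ ^ 2
          + lam / 2 * (2 - lam * L) * ‖lam⁻¹ • (x - S)‖ ^ 2 := by
  intro y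
  set z : H := x - lam • ghat with hz
  -- G1 : strong convexity lower bound for h
  have hk1conv : ConvexOn ℝ Set.univ (fun w => h w - μ / 2 * ‖w‖ ^ 2) :=
    strongConvexOn_iff_convex.mp hh
  have hk1grad : HasGradientAt (fun w => h w - μ / 2 * ‖w‖ ^ 2) (gradh x - μ • x) x :=
    hasGradientAt_sub (hgrad x) (hasGradientAt_half_sq μ x)
  have raw1 := grad_ineq hk1conv hk1grad y
  have e1 : ‖y - x‖ ^ 2 = ‖y‖ ^ 2 - ‖x‖ ^ 2 - 2 * ⟪x, y - x⟫ := by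
    have h1 : ⟪x, y - x⟫ = ⟪x, y⟫ - ‖x‖ ^ 2 := by
      rw [inner_sub_right, real_inner_self_eq_norm_sq]
    have h2 := norm_sub_sq_real y x
    have h3 := real_inner_comm y x
    linarith
  have es1 : ⟪gradh x - μ • x, y - x⟫ = ⟪gradh x, y - x⟫ - μ * ⟪x, y - x⟫ := by
    rw [inner_sub_left, real_inner_smul_left]
  have G1 : h x + ⟪gradh x, y - x⟫ + μ / 2 * ‖y - x‖ ^ 2 ≤ h y := by
    rw [es1] at raw1; rw [e1]; linarith
  -- G2 : descent lemma for h
  have hk2conv : ConvexOn ℝ Set.univ (fun w => L / 2 * ‖w‖ ^ 2 - h w) := by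
    apply convexOn_of_monotone_grad (gF := fun w => L • w - gradh w)
    · exact fun w => hasGradientAt_sub (hasGradientAt_half_sq L w) (hgrad w)
    · intro a b
      have hsplit : ⟪(L • a - gradh a) - (L • b - gradh b), a - b⟫
          = L * ⟪a - b, a - b⟫ - ⟪gradh a - gradh b, a - b⟫ := by
        have hv : (L • a - gradh a) - (L • b - gradh b)
            = L • (a - b) - (gradh a - gradh b) := by rw [smul_sub]; abel
        rw [hv, inner_sub_left, real_inner_smul_left]
      rw [hsplit]
      have hcs := real_inner_le_norm (gradh a - gradh b) (a - b)
      have hl := hLip a b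
      have h3 : ⟪a - b, a - b⟫ = ‖a - b‖ ^ 2 := real_inner_self_eq_norm_sq _
      nlinarith [norm_nonneg (a - b), mul_le_mul_of_nonneg_right hl (norm_nonneg (a - b))]
  have hk2grad : HasGradientAt (fun w => L / 2 * ‖w‖ ^ 2 - h w) (L • x - gradh x) x :=
    hasGradientAt_sub (hasGradientAt_half_sq L x) (hgrad x)
  have raw2 := grad_ineq hk2conv hk2grad S
  have e2 : ‖S - x‖ ^ 2 = ‖S‖ ^ 2 - ‖x‖ ^ 2 - 2 * ⟪x, S - x⟫ := by
    have h1 : ⟪x, S - x⟫ = ⟪x, S⟫ - ‖x‖ ^ 2 := by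
      rw [inner_sub_right, real_inner_self_eq_norm_sq]
    have h2 := norm_sub_sq_real S x
    have h3 := real_inner_comm S x
    linarith
  have es2 : ⟪L • x - gradh x, S - x⟫ = L * ⟪x, S - x⟫ - ⟪gradh x, S - x⟫ := by
    rw [inner_sub_left, real_inner_smul_left]
  have G2 : h S ≤ h x + ⟪gradh x, S - x⟫ + L / 2 * ‖S - x‖ ^ 2 := by
    rw [es2] at raw2; rw [e2]; linarith
  -- minimality of P
  have hmin : ∀ w : H, g P + ‖P - z‖ ^ 2 / (2 * lam) ≤ g w + ‖w - z‖ ^ 2 / (2 * lam) :=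
    fun w => isMinOn_iff.mp hP w (Set.mem_univ w)
  -- G3 : subgradient inequality at P
  have G3 : g P ≤ g y + ⟪P - z, y - P⟫ / lam := by
    have key3 : ∀ t ∈ Set.Ioc (0:ℝ) 1,
        0 ≤ (g y - g P) + ⟪P - z, y - P⟫ / lam + t * (‖y - P‖ ^ 2 / (2 * lam)) := by
      intro t ht
      have ht0 : (0:ℝ) < t := ht.1
      have happ := hmin (P + t • (y - P))
      have hcv : g (P + t • (y - P)) ≤ (1 - t) * g P + t * g y := by
        have hmm : (1 - t) • P + t • y = P + t • (y - P) := by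
          rw [sub_smul, one_smul, smul_sub]; abel
        have := hg.2 (Set.mem_univ P) (Set.mem_univ y)
          (by linarith [ht.2] : (0:ℝ) ≤ 1 - t) (le_of_lt ht0) (by ring)
        simpa [hmm] using this
      have hnorm : ‖(P + t • (y - P)) - z‖ ^ 2
          = ‖P - z‖ ^ 2 + 2 * t * ⟪P - z, y - P⟫ + t ^ 2 * ‖y - P‖ ^ 2 := by
        have hv : (P + t • (y - P)) - z = (P - z) + t • (y - P) := by abel
        rw [hv, norm_add_sq_real, real_inner_smul_right, norm_smul]
        simp [mul_pow, sq_abs]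
        ring
      rw [hnorm] at happ
      have hfr : (‖P - z‖ ^ 2 + 2 * t * ⟪P - z, y - P⟫ + t ^ 2 * ‖y - P‖ ^ 2) / (2 * lam)
          = ‖P - z‖ ^ 2 / (2 * lam) + t * (⟪P - z, y - P⟫ / lam)
            + t * (t * (‖y - P‖ ^ 2 / (2 * lam))) := by
        field_simp
      rw [hfr] at happ
      have hte : 0 ≤ t * ((g y - g P) + ⟪P - z, y - P⟫ / lam
          + t * (‖y - P‖ ^ 2 / (2 * lam))) := by nlinarith [happ, hcv]
      exact (mul_nonneg_iff_of_pos_left ht0).mp hte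
    have hlim : Filter.Tendsto
        (fun t : ℝ => (g y - g P) + ⟪P - z, y - P⟫ / lam + t * (‖y - P‖ ^ 2 / (2 * lam)))
        (nhdsWithin 0 (Set.Ioi 0))
        (nhds ((g y - g P) + ⟪P - z, y - P⟫ / lam)) := by
      have hc : Continuous
          (fun t : ℝ => (g y - g P) + ⟪P - z, y - P⟫ / lam + t * (‖y - P‖ ^ 2 / (2 * lam))) := by
        continuity
      have h0 := (hc.tendsto 0).mono_left (nhdsWithin_le_nhds (s := Set.Ioi (0:ℝ)))
      simpa using h0
    have hmem : Set.Ioc (0:ℝ) 1 ∈ nhdsWithin (0:ℝ) (Set.Ioi 0) :=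
      Ioc_mem_nhdsGT_of_mem ⟨le_refl 0, zero_lt_one⟩
    have := ge_of_tendsto hlim (by filter_upwards [hmem] with t ht using key3 t ht)
    linarith
  -- G4 : near-optimality of S
  have hb : BddBelow (Set.range fun w : H => g w + ‖w - z‖ ^ 2 / (2 * lam)) :=
    ⟨g P + ‖P - z‖ ^ 2 / (2 * lam), by rintro v ⟨w, rfl⟩; exact hmin w⟩
  have hinf_le := ciInf_le hb P
  have G4 : g S + ‖S - z‖ ^ 2 / (2 * lam)
      ≤ ε ^ 2 / (2 * lam) + (g P + ‖P - z‖ ^ 2 / (2 * lam)) := le_trans hS (by linarith)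
  -- key algebraic identity
  have key : ⟪gradh x, y - x⟫ - ⟪gradh x, S - x⟫ - L / 2 * ‖S - x‖ ^ 2
        - ⟪P - z, y - P⟫ / lam + ‖S - z‖ ^ 2 / (2 * lam) - ‖P - z‖ ^ 2 / (2 * lam)
      = ⟪lam⁻¹ • (x - S), y - x⟫
        + (1 / lam) * ⟪(S - P) + lam • (gradh x - ghat), y - S⟫
        + lam / 2 * (2 - lam * L) * ‖lam⁻¹ • (x - S)‖ ^ 2
        + ‖S - P‖ ^ 2 / (2 * lam) := by
    rw [hz]
    simp only [← real_inner_self_eq_norm_sq, inner_sub_left, inner_sub_right,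
      inner_add_left, inner_add_right, real_inner_smul_left, real_inner_smul_right]
    simp only [real_inner_comm y x, real_inner_comm S x, real_inner_comm S y,
      real_inner_comm P x, real_inner_comm P y, real_inner_comm P S,
      real_inner_comm (gradh x) x, real_inner_comm (gradh x) y, real_inner_comm (gradh x) S,
      real_inner_comm (gradh x) P, real_inner_comm ghat x, real_inner_comm ghat y,
      real_inner_comm ghat S, real_inner_comm ghat P, real_inner_comm ghat (gradh x)]
    field_simp
    ring
  have hpos : (0:ℝ) ≤ ‖S - P‖ ^ 2 / (2 * lam) := by positivity
  linarith [G1, G2, G3, G4, key, hpos]
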